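/- For every 1 ≤ i ≤ n−1 and every (a,b) ∈ ℂ² with (a,b) ≠ (0,0), the quotient ℂ[x,y]/I_i(a,b) is an n-dimensional ℂ-vector space: dim_ℂ ℂ[x,y]/I_i(a,b) = n. (Thus I_i(a,b) defines a ℤ_n-cluster, i.e. a length-n ℤ_n-invariant subscheme of ℂ².) -/

import Mathlib

open MvPolynomial

/-- The Ito–Nakamura ideal `I_i(a,b) = ⟨a·xⁱ − b·y^{n−i}, x^{i+1}, xy, y^{n+1−i}⟩`. -/
noncomputable def itoNak (n i : ℕ) (a b : ℂ) : Ideal (MvPolynomial (Fin 2) ℂ) :=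
  Ideal.span
    {C a * X 0 ^ i - C b * X 1 ^ (n - i), X 0 ^ (i + 1), X 0 * X 1, X 1 ^ (n + 1 - i)}

/- ---------------------------------------------------------------------------
Auxiliary material
--------------------------------------------------------------------------- -/

/-- The candidate basis polynomials `1, x, …, x^i, y, …, y^{n-1-i}`. -/
noncomputable def inWW (i : ℕ) (k : ℕ) : MvPolynomial (Fin 2) ℂ :=
  if k ≤ i then X 0 ^ k else X 1 ^ (k - i)

/-- The linear functionals detecting the basis monomials modulo the ideal. -/
noncomputable def inLL (n i : ℕ) (a b : ℂ) :
    MvPolynomial (Fin 2) ℂ →ₗ[ℂ] (Fin n → ℂ) :=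
  LinearMap.pi fun k =>
    if (k : ℕ) < i then lcoeff ℂ (Finsupp.single 0 (k : ℕ))
    else if (k : ℕ) = i then
      b • lcoeff ℂ (Finsupp.single 0 i) + a • lcoeff ℂ (Finsupp.single 1 (n - i))
    else lcoeff ℂ (Finsupp.single 1 ((k : ℕ) - i))

lemma inLL_apply (n i : ℕ) (a b : ℂ) (p : MvPolynomial (Fin 2) ℂ) (k : Fin n) :
    inLL n i a b p k =
      if (k : ℕ) < i then coeff (Finsupp.single 0 (k : ℕ)) p
      else if (k : ℕ) = i then
        b * coeff (Finsupp.single 0 i) p + a * coeff (Finsupp.single 1 (n - i)) p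
      else coeff (Finsupp.single 1 ((k : ℕ) - i)) p := by
  unfold inLL
  rw [LinearMap.pi_apply]
  split_ifs <;> simp [lcoeff_apply, smul_eq_mul]

/-- A single Finsupp is not ≤ another single one, under suitable hypotheses. -/
lemma single_not_le (j₁ : Fin 2) (t₁ : ℕ) (j₂ : Fin 2) (t₂ : ℕ)
    (h0 : t₁ ≠ 0) (hj : j₁ = j₂ → ¬ t₁ ≤ t₂) :
    ¬ Finsupp.single j₁ t₁ ≤ Finsupp.single j₂ t₂ := by
  intro hle
  have h := Finsupp.single_le_iff.mp hle
  rw [Finsupp.single_apply] at h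
  split_ifs at h with hjj
  · exact hj hjj.symm h
  · omega

lemma pair_not_le (j : Fin 2) (t : ℕ) :
    ¬ (Finsupp.single (0 : Fin 2) 1 + Finsupp.single 1 1) ≤ Finsupp.single j t := by
  intro hle
  fin_cases j
  · have h := Finsupp.le_def.mp hle 1
    simp [Finsupp.single_apply] at h
  · have h := Finsupp.le_def.mp hle 0
    simp [Finsupp.single_apply] at h

lemma coeff_mul_monomial_zero (m s : Fin 2 →₀ ℕ) (c : ℂ)
    (r : MvPolynomial (Fin 2) ℂ) (h : ¬ s ≤ m) :
    coeff m (r * monomial s c) = 0 := by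
  rw [coeff_mul_monomial', if_neg h]

/-- the functionals vanish on the ideal. -/
lemma inLL_ker (n i : ℕ) (h1 : 1 ≤ i) (h2 : i ≤ n - 1) (a b : ℂ) :
    ∀ p ∈ itoNak n i a b, inLL n i a b p = 0 := by
  have hn : 2 ≤ n := by omega
  -- vanishing on multiples of each generator
  have e1 : ∀ (r : MvPolynomial (Fin 2) ℂ) (k : Fin n),
      inLL n i a b (r * (C a * X 0 ^ i - C b * X 1 ^ (n - i))) k = 0 := by
    intro r k
    have hk : (k : ℕ) < n := k.2
    rw [C_mul_X_pow_eq_monomial, C_mul_X_pow_eq_monomial, mul_sub, inLL_apply]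
    split_ifs with hlt heq
    · rw [coeff_sub,
        coeff_mul_monomial_zero _ _ _ _ (single_not_le _ _ _ _ (by omega) (fun _ => by omega)),
        coeff_mul_monomial_zero _ _ _ _ (single_not_le _ _ _ _ (by omega) (fun h => absurd h (by decide)))]
      ring
    · rw [coeff_sub, coeff_sub,
        coeff_mul_monomial' (Finsupp.single 0 i) (Finsupp.single 0 i) a r,
        if_pos le_rfl, tsub_self,
        coeff_mul_monomial_zero _ _ _ _ (single_not_le _ _ _ _ (by omega) (fun h => absurd h (by decide))),
        coeff_mul_monomial_zero _ _ _ _ (single_not_le _ _ _ _ (by omega) (fun h => absurd h.symm (by decide))),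
        coeff_mul_monomial' (Finsupp.single 1 (n - i)) (Finsupp.single 1 (n - i)) b r,
        if_pos le_rfl, tsub_self]
      ring
    · rw [coeff_sub,
        coeff_mul_monomial_zero _ _ _ _ (single_not_le _ _ _ _ (by omega) (fun h => absurd h (by decide))),
        coeff_mul_monomial_zero _ _ _ _ (single_not_le _ _ _ _ (fun h => by omega) (fun _ => by omega))]
      ring
  have e2 : ∀ (r : MvPolynomial (Fin 2) ℂ) (k : Fin n),
      inLL n i a b (r * X 0 ^ (i + 1)) k = 0 := by
    intro r k
    rw [X_pow_eq_monomial, inLL_apply]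
    split_ifs with hlt heq
    · exact coeff_mul_monomial_zero _ _ _ _
        (single_not_le _ _ _ _ (by omega) (fun _ => by omega))
    · rw [coeff_mul_monomial_zero _ _ _ _
        (single_not_le _ _ _ _ (by omega) (fun _ => by omega)),
        coeff_mul_monomial_zero _ _ _ _
        (single_not_le _ _ _ _ (by omega) (fun h => absurd h (by decide)))]
      ring
    · exact coeff_mul_monomial_zero _ _ _ _
        (single_not_le _ _ _ _ (by omega) (fun h => absurd h (by decide)))
  have e3 : ∀ (r : MvPolynomial (Fin 2) ℂ) (k : Fin n),
      inLL n i a b (r * (X 0 * X 1)) k = 0 := by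
    intro r k
    have hmon : (X (0:Fin 2) * X 1 : MvPolynomial (Fin 2) ℂ)
        = monomial (Finsupp.single 0 1 + Finsupp.single 1 1) 1 := by
      rw [← pow_one (X (0:Fin 2)), ← pow_one (X (1:Fin 2)), X_pow_eq_monomial,
        X_pow_eq_monomial, monomial_mul, one_mul]
    rw [hmon, inLL_apply]
    split_ifs with hlt heq
    · exact coeff_mul_monomial_zero _ _ _ _ (pair_not_le _ _)
    · rw [coeff_mul_monomial_zero _ _ _ _ (pair_not_le _ _),
        coeff_mul_monomial_zero _ _ _ _ (pair_not_le _ _)]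
      ring
    · exact coeff_mul_monomial_zero _ _ _ _ (pair_not_le _ _)
  have e4 : ∀ (r : MvPolynomial (Fin 2) ℂ) (k : Fin n),
      inLL n i a b (r * X 1 ^ (n + 1 - i)) k = 0 := by
    intro r k
    have hk : (k : ℕ) < n := k.2
    rw [X_pow_eq_monomial, inLL_apply]
    split_ifs with hlt heq
    · exact coeff_mul_monomial_zero _ _ _ _
        (single_not_le _ _ _ _ (by omega) (fun h => absurd h (by decide)))
    · rw [coeff_mul_monomial_zero _ _ _ _
        (single_not_le _ _ _ _ (by omega) (fun h => absurd h (by decide))),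
        coeff_mul_monomial_zero _ _ _ _
        (single_not_le _ _ _ _ (by omega) (fun _ => by omega))]
      ring
    · exact coeff_mul_monomial_zero _ _ _ _
        (single_not_le _ _ _ _ (by omega) (fun _ => by omega))
  intro p hp
  rw [itoNak, Ideal.mem_span_insert] at hp
  obtain ⟨r1, z1, hz1, rfl⟩ := hp
  rw [Ideal.mem_span_insert] at hz1
  obtain ⟨r2, z2, hz2, rfl⟩ := hz1
  rw [Ideal.mem_span_insert] at hz2
  obtain ⟨r3, z3, hz3, rfl⟩ := hz2
  rw [Ideal.mem_span_singleton'] at hz3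
  obtain ⟨r4, rfl⟩ := hz3
  funext k
  simp only [map_add, Pi.add_apply, Pi.zero_apply]
  rw [e1, e2, e3, e4]
  ring

lemma monomial_one_eq (u : Fin 2 →₀ ℕ) :
    (monomial u (1:ℂ) : MvPolynomial (Fin 2) ℂ) = X 0 ^ (u 0) * X 1 ^ (u 1) := by
  have hu : u = Finsupp.single 0 (u 0) + Finsupp.single 1 (u 1) := by
    ext j
    fin_cases j <;> simp [Finsupp.single_apply]
  conv_lhs => rw [hu]
  rw [X_pow_eq_monomial, X_pow_eq_monomial, monomial_mul, one_mul]

lemma inCoeffXX (j : Fin 2) (s t : ℕ) :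
    coeff (Finsupp.single j t) (X j ^ s : MvPolynomial (Fin 2) ℂ)
      = if s = t then 1 else 0 := by
  rw [coeff_X_pow]
  by_cases h : s = t
  · subst h; rw [if_pos rfl, if_pos rfl]
  · rw [if_neg h, if_neg]
    intro hh
    rcases Finsupp.single_eq_single_iff _ _ _ _ |>.mp hh with ⟨_, h'⟩ | ⟨h1, h2⟩
    · exact h h'
    · exact h (h1.trans h2.symm)

lemma inCoeffXY (j j' : Fin 2) (s t : ℕ) (hj : j ≠ j') (hs : ¬(s = 0 ∧ t = 0)) :
    coeff (Finsupp.single j' t) (X j ^ s : MvPolynomial (Fin 2) ℂ) = 0 := by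
  rw [coeff_X_pow, if_neg]
  intro hh
  rcases Finsupp.single_eq_single_iff _ _ _ _ |>.mp hh with ⟨h', _⟩ | ⟨h1, h2⟩
  · exact hj h'
  · exact hs ⟨h1, h2⟩

theorem itoNak_colength_aux (n i : ℕ) (h1 : 1 ≤ i) (h2 : i ≤ n - 1) (a b : ℂ)
    (hb : b ≠ 0) :
    Module.finrank ℂ (MvPolynomial (Fin 2) ℂ ⧸ itoNak n i a b) = n := by
  have hn : 2 ≤ n := by omega
  have hg1 : (C a * X 0 ^ i - C b * X 1 ^ (n - i) : MvPolynomial (Fin 2) ℂ)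
      ∈ itoNak n i a b := by
    unfold itoNak; exact Ideal.subset_span (by simp)
  have hg2 : (X 0 ^ (i + 1) : MvPolynomial (Fin 2) ℂ) ∈ itoNak n i a b := by
    unfold itoNak; exact Ideal.subset_span (by simp)
  have hg3 : (X 0 * X 1 : MvPolynomial (Fin 2) ℂ) ∈ itoNak n i a b := by
    unfold itoNak; exact Ideal.subset_span (by simp)
  have hg4 : (X 1 ^ (n + 1 - i) : MvPolynomial (Fin 2) ℂ) ∈ itoNak n i a b := by
    unfold itoNak; exact Ideal.subset_span (by simp)
  set μ := Ideal.Quotient.mkₐ ℂ (itoNak n i a b) with hμdef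
  have hzero : ∀ p ∈ itoNak n i a b, μ p = 0 := by
    intro p hp
    rw [hμdef, Ideal.Quotient.mkₐ_eq_mk]
    exact Ideal.Quotient.eq_zero_iff_mem.mpr hp
  set v : Fin n → (MvPolynomial (Fin 2) ℂ ⧸ itoNak n i a b) :=
    fun k => μ (inWW i ↑k) with hvdef
  -- spanning
  have key : ∀ j k : ℕ, μ (X 0 ^ j * X 1 ^ k) ∈ Submodule.span ℂ (Set.range v) := by
    intro j k
    rcases Nat.eq_zero_or_pos j with hj | hj
    · subst hj
      rw [pow_zero, one_mul]
      rcases Nat.eq_zero_or_pos k with hk | hk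
      · subst hk
        rw [pow_zero]
        refine Submodule.subset_span ⟨⟨0, by omega⟩, ?_⟩
        show μ (inWW i 0) = μ 1
        unfold inWW
        rw [if_pos (Nat.zero_le _), pow_zero]
      · by_cases hk1 : k ≤ n - 1 - i
        · refine Submodule.subset_span ⟨⟨i + k, by omega⟩, ?_⟩
          show μ (inWW i (i + k)) = μ (X 1 ^ k)
          unfold inWW
          rw [if_neg (show ¬ i + k ≤ i by omega)]
          congr 2
          omega
        · by_cases hk2 : k = n - i
          · subst hk2
            have h0 := hzero _ hg1
            rw [map_sub, sub_eq_zero, ← smul_eq_C_mul, ← smul_eq_C_mul,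
              map_smul, map_smul] at h0
            have hrel : μ (X 1 ^ (n - i)) = (b⁻¹ * a) • μ (X 0 ^ i) := by
              rw [mul_smul, h0, smul_smul, inv_mul_cancel₀ hb, one_smul]
            rw [hrel]
            refine Submodule.smul_mem _ _ (Submodule.subset_span ⟨⟨i, by omega⟩, ?_⟩)
            show μ (inWW i i) = μ (X 0 ^ i)
            unfold inWW
            rw [if_pos le_rfl]
          · have hmem : (X 1 ^ k : MvPolynomial (Fin 2) ℂ) ∈ itoNak n i a b := by
              have e : (X 1 : MvPolynomial (Fin 2) ℂ) ^ k
                  = X 1 ^ (k - (n + 1 - i)) * X 1 ^ (n + 1 - i) := by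
                rw [← pow_add]; congr 1; omega
              rw [e]
              exact Ideal.mul_mem_left _ _ hg4
            rw [hzero _ hmem]
            exact Submodule.zero_mem _
    · rcases Nat.eq_zero_or_pos k with hk | hk
      · subst hk
        rw [pow_zero, mul_one]
        by_cases hji : j ≤ i
        · refine Submodule.subset_span ⟨⟨j, by omega⟩, ?_⟩
          show μ (inWW i j) = μ (X 0 ^ j)
          unfold inWW
          rw [if_pos hji]
        · have hmem : (X 0 ^ j : MvPolynomial (Fin 2) ℂ) ∈ itoNak n i a b := by
            have e : (X 0 : MvPolynomial (Fin 2) ℂ) ^ j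
                = X 0 ^ (j - (i + 1)) * X 0 ^ (i + 1) := by
              rw [← pow_add]; congr 1; omega
            rw [e]
            exact Ideal.mul_mem_left _ _ hg2
          rw [hzero _ hmem]
          exact Submodule.zero_mem _
      · have hmem : (X 0 ^ j * X 1 ^ k : MvPolynomial (Fin 2) ℂ) ∈ itoNak n i a b := by
          have e : (X 0 ^ j * X 1 ^ k : MvPolynomial (Fin 2) ℂ)
              = (X 0 ^ (j - 1) * X 1 ^ (k - 1)) * (X 0 * X 1) := by
            rw [mul_mul_mul_comm, ← pow_succ, ← pow_succ]
            congr 2 <;> omega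
          rw [e]
          exact Ideal.mul_mem_left _ _ hg3
        rw [hzero _ hmem]
        exact Submodule.zero_mem _
  have hspan : ⊤ ≤ Submodule.span ℂ (Set.range v) := by
    rintro q -
    obtain ⟨p, rfl⟩ := Ideal.Quotient.mkₐ_surjective ℂ _ q
    refine MvPolynomial.induction_on' p ?_ ?_
    · intro u c
      have h : (monomial u) c = c • ((monomial u) (1:ℂ)) := by
        rw [smul_monomial, smul_eq_mul, mul_one]
      rw [h, monomial_one_eq, map_smul]
      exact Submodule.smul_mem _ _ (key (u 0) (u 1))
    · intro p q hp hq
      rw [map_add]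
      exact Submodule.add_mem _ hp hq
  -- linear independence
  have hmat : ∀ k k₀ : Fin n, inLL n i a b (inWW i ↑k) k₀
      = if k = k₀ then (if (k₀ : ℕ) = i then b else 1) else 0 := by
    intro k k₀
    have hkn : (k : ℕ) < n := k.2
    have hk0n : (k₀ : ℕ) < n := k₀.2
    rw [inLL_apply]
    unfold inWW
    rcases lt_trichotomy ((k₀ : ℕ)) i with h₀ | h₀ | h₀
    · rw [if_pos h₀]
      by_cases hk : (k : ℕ) ≤ i
      · rw [if_pos hk, inCoeffXX]
        by_cases hkk : k = k₀
        · subst hkk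
          rw [if_pos rfl, if_pos rfl, if_neg (show ¬ (k : ℕ) = i by omega)]
        · rw [if_neg (fun h => hkk (Fin.ext h)), if_neg hkk]
      · rw [if_neg hk, inCoeffXY _ _ _ _ (by decide) (by omega),
          if_neg (show k ≠ k₀ from fun h => hk (by rw [h]; omega))]
    · rw [if_neg (show ¬ (k₀ : ℕ) < i by omega), if_pos h₀]
      by_cases hk : (k : ℕ) ≤ i
      · rw [if_pos hk, inCoeffXX,
          inCoeffXY _ _ _ _ (by decide) (by omega)]
        by_cases hkk : (k : ℕ) = i
        · rw [if_pos hkk, if_pos (Fin.ext (show (k:ℕ) = (k₀:ℕ) by omega)), if_pos h₀]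
          ring
        · rw [if_neg hkk, if_neg (show k ≠ k₀ from fun h => hkk (by rw [h, h₀]))]
          ring
      · rw [if_neg hk, inCoeffXY _ _ _ _ (by decide) (by omega),
          inCoeffXX, if_neg (show ¬ (k:ℕ) - i = n - i by omega),
          if_neg (show k ≠ k₀ from fun h => hk (by rw [h]; omega))]
        ring
    · rw [if_neg (show ¬ (k₀ : ℕ) < i by omega), if_neg (show ¬ (k₀ : ℕ) = i by omega)]
      by_cases hk : (k : ℕ) ≤ i
      · rw [if_pos hk, inCoeffXY _ _ _ _ (by decide) (by omega),
          if_neg (show k ≠ k₀ from fun h => by rw [h] at hk; omega)]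
      · rw [if_neg hk, inCoeffXX]
        by_cases hkk : k = k₀
        · subst hkk
          rw [if_pos rfl, if_pos rfl, if_neg (show ¬ (k : ℕ) = i by omega)]
        · rw [if_neg (show ¬ (k:ℕ) - i = (k₀:ℕ) - i from
            fun h => hkk (Fin.ext (by omega))), if_neg hkk]
  have hind : LinearIndependent ℂ v := by
    rw [Fintype.linearIndependent_iff]
    intro c hc k₀
    have hmem : (∑ k : Fin n, c k • inWW i ↑k) ∈ itoNak n i a b := by
      rw [← Ideal.Quotient.eq_zero_iff_mem, ← Ideal.Quotient.mkₐ_eq_mk (R₁ := ℂ), ← hμdef,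
        map_sum]
      simp_rw [map_smul]
      exact hc
    have hL := inLL_ker n i h1 h2 a b _ hmem
    have hL0 := congrFun hL k₀
    rw [map_sum, Finset.sum_apply] at hL0
    simp_rw [map_smul, Pi.smul_apply, smul_eq_mul, hmat] at hL0
    rw [Finset.sum_eq_single k₀ (fun k _ hk => by rw [if_neg hk, mul_zero])
      (fun h => absurd (Finset.mem_univ k₀) h), if_pos rfl] at hL0
    have hd : (if (k₀ : ℕ) = i then b else 1) ≠ 0 := by
      split_ifs
      · exact hb
      · exact one_ne_zero
    exact (mul_eq_zero.mp hL0).resolve_right hd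
  have hbasis : Module.Basis (Fin n) ℂ (MvPolynomial (Fin 2) ℂ ⧸ itoNak n i a b) :=
    Module.Basis.mk hind hspan
  rw [Module.finrank_eq_card_basis hbasis, Fintype.card_fin]

lemma itoNak_swap (n i : ℕ) (h1 : 1 ≤ i) (h2 : i ≤ n - 1) (a b : ℂ) :
    itoNak n (n - i) (-b) (-a) =
      Ideal.map ((renameEquiv ℂ (Equiv.swap (0 : Fin 2) 1) :
          MvPolynomial (Fin 2) ℂ ≃ₐ[ℂ] MvPolynomial (Fin 2) ℂ) :
          MvPolynomial (Fin 2) ℂ →+* MvPolynomial (Fin 2) ℂ)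
        (itoNak n i a b) := by
  have hni : n - (n - i) = i := by omega
  have hni2 : n + 1 - (n - i) = i + 1 := by omega
  have hni3 : n - i + 1 = n + 1 - i := by omega
  unfold itoNak
  rw [Ideal.map_span, Set.image_insert_eq, Set.image_insert_eq, Set.image_insert_eq,
    Set.image_singleton]
  simp only [map_sub, map_mul, map_pow, renameEquiv_apply, rename_C, rename_X,
    Equiv.swap_apply_left, Equiv.swap_apply_right, RingHom.coe_coe]
  rw [hni, hni2, hni3]
  apply le_antisymm <;> rw [Ideal.span_le] <;> intro x hx <;>
    simp only [Set.mem_insert_iff, Set.mem_singleton_iff] at hx <;>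
    refine Ideal.subset_span ?_ <;>
    simp only [Set.mem_insert_iff, Set.mem_singleton_iff] <;>
    rcases hx with rfl | rfl | rfl | rfl
  · exact Or.inl (by rw [map_neg, map_neg]; ring)
  · exact Or.inr (Or.inr (Or.inr rfl))
  · exact Or.inr (Or.inr (Or.inl (mul_comm _ _)))
  · exact Or.inr (Or.inl rfl)
  · exact Or.inl (by rw [map_neg, map_neg]; ring)
  · exact Or.inr (Or.inr (Or.inr rfl))
  · exact Or.inr (Or.inr (Or.inl (mul_comm _ _)))
  · exact Or.inr (Or.inl rfl)

/-- for `(a,b) ≠ (0,0)`, `dim_ℂ ℂ[x,y]/I_i(a,b) = n`. -/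
theorem itoNak_colength (n i : ℕ) (h1 : 1 ≤ i) (h2 : i ≤ n - 1) (a b : ℂ)
    (hab : ¬(a = 0 ∧ b = 0)) :
    Module.finrank ℂ (MvPolynomial (Fin 2) ℂ ⧸ itoNak n i a b) = n := by
  by_cases hbz : b = 0
  · subst hbz
    have ha : a ≠ 0 := fun h => hab ⟨h, rfl⟩
    have e := Ideal.quotientEquivAlg (R₁ := ℂ) (itoNak n i a 0) (itoNak n (n - i) (-0) (-a))
      (renameEquiv ℂ (Equiv.swap (0 : Fin 2) 1)) (itoNak_swap n i h1 h2 a 0)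
    rw [e.toLinearEquiv.finrank_eq]
    exact itoNak_colength_aux n (n - i) (by omega) (by omega) (-0) (-a) (neg_ne_zero.mpr ha)
  · exact itoNak_colength_aux n i h1 h2 a b hbz
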